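/- arXiv:2208.09986 — 2 statements merged into one kernel-verified Lean document; each statement's English description precedes it below -/
import Mathlib

section
/- Let r ≥ 1, δ ∈ (0, 1), T > 0, and let q₀ : ℝ → [0, ∞) be measurable. Define q(t, z) = (2πt)^{-1/2} ∫_ℝ exp(-|z - z₀|²/(2t)) q₀(z₀) dz₀ for t ∈ (0, T]. If there exists α > 0 such that ∫_ℝ exp(α·z₀²) q₀(z₀)^r dz₀ < ∞, then ∫_ℝ ( ∫₀^T q(t, z)^r dt )^δ dz < ∞. -/
open MeasureTheory Real
open scoped ENNReal NNReal

lemma aux_ofReal_integral_le {f : ℝ → ℝ} (hf : ∀ x, 0 ≤ f x) :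
    ENNReal.ofReal (∫ x, f x) ≤ ∫⁻ x, ENNReal.ofReal (f x) := by
  calc ENNReal.ofReal (∫ x, f x) ≤ (‖(∫ x, f x)‖₊ : ℝ≥0∞) := Real.ofReal_le_enorm _
    _ ≤ ∫⁻ x, (‖f x‖₊ : ℝ≥0∞) := enorm_integral_le_lintegral_enorm _
    _ = ∫⁻ x, ENNReal.ofReal (f x) := by
        refine lintegral_congr fun x => ?_
        change ‖f x‖ₑ = _
        rw [← ofReal_norm, Real.norm_of_nonneg (hf x)]

lemma aux_jensen {r : ℝ} (hr : 1 ≤ r) {P Q : ℝ → ℝ≥0∞} (hP : Measurable P)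
    (hQ : Measurable Q) (hP0 : ∀ x, P x ≠ 0) (hPt : ∀ x, P x ≠ ⊤)
    (hP1 : ∫⁻ x, P x = 1) :
    (∫⁻ x, P x * Q x) ^ r ≤ ∫⁻ x, P x * Q x ^ r := by
  rcases eq_or_lt_of_le hr with h1 | h1
  · simp [← h1]
  have hr0 : r ≠ 0 := by positivity
  set p := Real.conjExponent r with hp
  have hpq : p.HolderConjugate r := (Real.HolderConjugate.conjExponent h1).symm
  have hinv : 1 / p + 1 / r = 1 := by
    simpa [one_div] using hpq.inv_add_inv_eq_one
  have key : (∫⁻ x, P x * Q x) ≤ (∫⁻ x, P x * Q x ^ r) ^ (1 / r) := by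
    have h := ENNReal.lintegral_mul_le_Lp_mul_Lq volume hpq
      ((hP.pow_const _).aemeasurable)
      (((hP.pow_const _).mul hQ).aemeasurable)
      (f := fun x => P x ^ (1 / p)) (g := fun x => P x ^ (1 / r) * Q x)
    have e1 : ∀ x, P x ^ (1 / p) * (P x ^ (1 / r) * Q x) = P x * Q x := by
      intro x
      rw [← mul_assoc, ← ENNReal.rpow_add _ _ (hP0 x) (hPt x), hinv, ENNReal.rpow_one]
    have e2 : ∀ x, (P x ^ (1 / p)) ^ p = P x := by
      intro x
      rw [← ENNReal.rpow_mul, one_div_mul_cancel hpq.ne_zero, ENNReal.rpow_one]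
    have e3 : ∀ x, (P x ^ (1 / r) * Q x) ^ r = P x * Q x ^ r := by
      intro x
      rw [ENNReal.mul_rpow_of_nonneg _ _ (by positivity), ← ENNReal.rpow_mul,
        one_div_mul_cancel hr0, ENNReal.rpow_one]
    simp only [Pi.mul_apply, e1, e2, e3] at h
    simpa [hP1] using h
  calc (∫⁻ x, P x * Q x) ^ r ≤ ((∫⁻ x, P x * Q x ^ r) ^ (1 / r)) ^ r :=
        ENNReal.rpow_le_rpow key (by positivity)
    _ = ∫⁻ x, P x * Q x ^ r := by
        rw [← ENNReal.rpow_mul, one_div_mul_cancel hr0, ENNReal.rpow_one]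

lemma aux_gauss_int {t : ℝ} (ht : 0 < t) (z : ℝ) :
    Integrable (fun z₀ : ℝ => Real.exp (-(z - z₀) ^ 2 / (2 * t))) ∧
    ∫ z₀ : ℝ, Real.exp (-(z - z₀) ^ 2 / (2 * t)) = Real.sqrt (2 * Real.pi * t) := by
  have hb : 0 < (2 * t)⁻¹ := by positivity
  have heq : (fun z₀ : ℝ => Real.exp (-(z - z₀) ^ 2 / (2 * t)))
      = fun z₀ : ℝ => Real.exp (-(2 * t)⁻¹ * (z - z₀) ^ 2) := by
    funext z₀; congr 1; field_simp
  constructor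
  · rw [heq]
    simpa using (integrable_exp_neg_mul_sq hb).comp_sub_left z
  · rw [heq]
    have h1 : ∫ z₀ : ℝ, Real.exp (-(2 * t)⁻¹ * (z - z₀) ^ 2)
        = ∫ x : ℝ, Real.exp (-(2 * t)⁻¹ * x ^ 2) :=
      integral_sub_left_eq_self (fun x => Real.exp (-(2 * t)⁻¹ * x ^ 2)) volume z
    rw [h1, integral_gaussian]
    congr 1
    field_simp

lemma aux_norm {t : ℝ} (ht : 0 < t) (z : ℝ) :
    ∫⁻ z₀ : ℝ, ENNReal.ofReal ((2 * Real.pi * t) ^ (-(1 : ℝ) / 2) *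
      Real.exp (-(z - z₀) ^ 2 / (2 * t))) = 1 := by
  obtain ⟨hi, hv⟩ := aux_gauss_int ht z
  have hK : (0:ℝ) < (2 * Real.pi * t) ^ (-(1 : ℝ) / 2) :=
    Real.rpow_pos_of_pos (by positivity) _
  rw [← ofReal_integral_eq_lintegral_ofReal (hi.const_mul _)
      (Filter.Eventually.of_forall fun x => by positivity)]
  rw [MeasureTheory.integral_const_mul, hv, Real.sqrt_eq_rpow]
  rw [← Real.rpow_add (by positivity)]
  norm_num

lemma aux_heat_bound {r : ℝ} (hr : 1 ≤ r) {q₀ : ℝ → ℝ} (hm : Measurable q₀)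
    (h0 : ∀ x, 0 ≤ q₀ x) {t : ℝ} (ht : 0 < t) (z : ℝ) :
    ENNReal.ofReal (((2 * Real.pi * t) ^ (-(1 : ℝ) / 2) *
        ∫ z₀ : ℝ, Real.exp (-|z - z₀| ^ 2 / (2 * t)) * q₀ z₀) ^ r)
      ≤ ∫⁻ z₀ : ℝ, ENNReal.ofReal ((2 * Real.pi * t) ^ (-(1 : ℝ) / 2) *
          Real.exp (-(z - z₀) ^ 2 / (2 * t))) * ENNReal.ofReal (q₀ z₀ ^ r) := by
  have hr0 : (0:ℝ) ≤ r := le_trans zero_le_one hr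
  set K : ℝ := (2 * Real.pi * t) ^ (-(1 : ℝ) / 2) with hKdef
  have hK : 0 < K := Real.rpow_pos_of_pos (by positivity) _
  set P : ℝ → ℝ≥0∞ := fun z₀ => ENNReal.ofReal (K * Real.exp (-(z - z₀) ^ 2 / (2 * t)))
    with hPdef
  set Q : ℝ → ℝ≥0∞ := fun z₀ => ENNReal.ofReal (q₀ z₀) with hQdef
  have hPm : Measurable P := by fun_prop
  have hQm : Measurable Q := by fun_prop
  have hInn : ∀ z₀ : ℝ, 0 ≤ Real.exp (-|z - z₀| ^ 2 / (2 * t)) * q₀ z₀ :=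
    fun z₀ => mul_nonneg (Real.exp_nonneg _) (h0 z₀)
  have hI : (0:ℝ) ≤ ∫ z₀ : ℝ, Real.exp (-|z - z₀| ^ 2 / (2 * t)) * q₀ z₀ :=
    integral_nonneg hInn
  have h1 : ENNReal.ofReal ((2 * Real.pi * t) ^ (-(1 : ℝ) / 2) *
        ∫ z₀ : ℝ, Real.exp (-|z - z₀| ^ 2 / (2 * t)) * q₀ z₀)
      ≤ ∫⁻ z₀, P z₀ * Q z₀ := by
    rw [← hKdef, ENNReal.ofReal_mul hK.le]
    calc ENNReal.ofReal K * ENNReal.ofReal (∫ z₀ : ℝ, Real.exp (-|z - z₀| ^ 2 / (2 * t)) * q₀ z₀)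
        ≤ ENNReal.ofReal K * ∫⁻ z₀, ENNReal.ofReal (Real.exp (-|z - z₀| ^ 2 / (2 * t)) * q₀ z₀) :=
          mul_le_mul_right (aux_ofReal_integral_le hInn) _
      _ = ∫⁻ z₀, ENNReal.ofReal K * ENNReal.ofReal (Real.exp (-|z - z₀| ^ 2 / (2 * t)) * q₀ z₀) :=
          (lintegral_const_mul _ (by fun_prop)).symm
      _ = ∫⁻ z₀, P z₀ * Q z₀ := by
          refine lintegral_congr fun z₀ => ?_
          simp only [hPdef, hQdef]
          rw [ENNReal.ofReal_mul (Real.exp_nonneg _), ← mul_assoc, ← ENNReal.ofReal_mul hK.le,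
            sq_abs]
  have hP1 : ∫⁻ z₀, P z₀ = 1 := aux_norm ht z
  have hP0 : ∀ z₀, P z₀ ≠ 0 := fun z₀ => (ENNReal.ofReal_pos.2 (by positivity)).ne'
  have hPt : ∀ z₀, P z₀ ≠ ⊤ := fun z₀ => ENNReal.ofReal_ne_top
  calc ENNReal.ofReal (((2 * Real.pi * t) ^ (-(1 : ℝ) / 2) *
        ∫ z₀ : ℝ, Real.exp (-|z - z₀| ^ 2 / (2 * t)) * q₀ z₀) ^ r)
      = ENNReal.ofReal ((2 * Real.pi * t) ^ (-(1 : ℝ) / 2) *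
        ∫ z₀ : ℝ, Real.exp (-|z - z₀| ^ 2 / (2 * t)) * q₀ z₀) ^ r := by
        rw [ENNReal.ofReal_rpow_of_nonneg (by positivity) hr0]
    _ ≤ (∫⁻ z₀, P z₀ * Q z₀) ^ r := ENNReal.rpow_le_rpow h1 hr0
    _ ≤ ∫⁻ z₀, P z₀ * Q z₀ ^ r := aux_jensen hr hPm hQm hP0 hPt hP1
    _ = ∫⁻ z₀ : ℝ, ENNReal.ofReal ((2 * Real.pi * t) ^ (-(1 : ℝ) / 2) *
          Real.exp (-(z - z₀) ^ 2 / (2 * t))) * ENNReal.ofReal (q₀ z₀ ^ r) := by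
        refine lintegral_congr fun z₀ => ?_
        rw [hQdef, hPdef, ENNReal.ofReal_rpow_of_nonneg (h0 z₀) hr0, hKdef]

theorem stmt_4 (r δ T : ℝ) (hr : 1 ≤ r) (hδ : δ ∈ Set.Ioo (0 : ℝ) 1) (hT : 0 < T)
    (q₀ : ℝ → ℝ) (hq₀m : Measurable q₀) (hq₀0 : ∀ z, 0 ≤ q₀ z)
    (q : ℝ → ℝ → ℝ)
    (hq : ∀ t ∈ Set.Ioc (0 : ℝ) T, ∀ z : ℝ,
      q t z = (2 * Real.pi * t) ^ (-(1 : ℝ) / 2) *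
        ∫ z₀ : ℝ, Real.exp (-|z - z₀| ^ 2 / (2 * t)) * q₀ z₀)
    (hint : ∃ α > (0 : ℝ), Integrable (fun z₀ : ℝ => Real.exp (α * z₀ ^ 2) * q₀ z₀ ^ r)) :
    Integrable (fun z : ℝ => (∫ t in Set.Ioc (0 : ℝ) T, q t z ^ r) ^ δ) := by
  obtain ⟨hδ0, hδ1⟩ := hδ
  obtain ⟨α, hα, hint⟩ := hint
  have hr0 : (0:ℝ) ≤ r := le_trans zero_le_one hr
  -- the Gaussian decay rate
  set c : ℝ := min (1 / (4 * T)) (α / 2) with hcdef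
  have hc0 : 0 < c := lt_min (by positivity) (by positivity)
  have hgauss : ∀ z z₀ : ℝ, c * z ^ 2 ≤ (z - z₀) ^ 2 / (2 * T) + α * z₀ ^ 2 := by
    intro z z₀
    have h1 : 2 * c ≤ 1 / (2 * T) := by
      have h := min_le_left (1 / (4 * T)) (α / 2)
      have h4 : (1:ℝ) / (2 * T) = 2 * (1 / (4 * T)) := by field_simp; ring
      linarith
    have h2 : 2 * c ≤ α := by
      have h := min_le_right (1 / (4 * T)) (α / 2); linarith
    have e : (z - z₀) ^ 2 / (2 * T) = (1 / (2 * T)) * (z - z₀) ^ 2 := by ring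
    rw [e]
    nlinarith [mul_nonneg (sub_nonneg.2 h1) (sq_nonneg (z - z₀)),
      mul_nonneg (sub_nonneg.2 h2) (sq_nonneg z₀),
      mul_nonneg hc0.le (sq_nonneg (z - 2 * z₀))]
  -- ENNReal data
  set H : ℝ → ℝ≥0∞ := fun z₀ => ENNReal.ofReal (Real.exp (α * z₀ ^ 2) * q₀ z₀ ^ r) with hHdef
  set M : ℝ≥0∞ := ∫⁻ z₀, H z₀ with hMdef
  have hMlt : M < ⊤ := hint.lintegral_lt_top
  set G : ℝ → ℝ≥0∞ := fun z₀ => ENNReal.ofReal (q₀ z₀ ^ r) with hGdef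
  have hGH : ∀ z₀ : ℝ, G z₀ = ENNReal.ofReal (Real.exp (-(α * z₀ ^ 2))) * H z₀ := by
    intro z₀
    simp only [hGdef, hHdef]
    rw [← ENNReal.ofReal_mul (Real.exp_nonneg _), ← mul_assoc, ← Real.exp_add]
    norm_num
  set P : ℝ → ℝ → ℝ≥0∞ := fun t x => ENNReal.ofReal ((2 * Real.pi * t) ^ (-(1 : ℝ) / 2) *
    Real.exp (-x ^ 2 / (2 * t))) with hPdef
  set κ : ℝ≥0∞ := ∫⁻ t in Set.Ioc (0:ℝ) T,
      ENNReal.ofReal ((2 * Real.pi * t) ^ (-(1 : ℝ) / 2)) with hκdef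
  have hKint : IntegrableOn (fun t : ℝ => (2 * Real.pi * t) ^ (-(1 : ℝ) / 2))
      (Set.Ioc (0:ℝ) T) := by
    have hint2 : IntegrableOn (fun t : ℝ => (2 * Real.pi) ^ (-(1:ℝ)/2) * t ^ (-(1:ℝ)/2))
        (Set.Ioc (0:ℝ) T) :=
      ((intervalIntegral.intervalIntegrable_rpow' (by norm_num)).1).const_mul _
    refine hint2.congr_fun (fun t ht => ?_) measurableSet_Ioc
    exact (Real.mul_rpow (by positivity) ht.1.le).symm
  have hκlt : κ < ⊤ := hKint.lintegral_lt_top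
  -- pointwise lintegral bound
  have hFz : ∀ z : ℝ, (∫⁻ t in Set.Ioc (0:ℝ) T, ENNReal.ofReal (q t z ^ r))
      ≤ ENNReal.ofReal (Real.exp (-(c * z ^ 2))) * (κ * M) := by
    intro z
    have hPGm : Measurable (Function.uncurry fun t z₀ : ℝ => P t (z - z₀) * G z₀) := by
      simp only [hPdef, hGdef, Function.uncurry]
      fun_prop
    have step1 : (∫⁻ t in Set.Ioc (0:ℝ) T, ENNReal.ofReal (q t z ^ r))
        ≤ ∫⁻ t in Set.Ioc (0:ℝ) T, ∫⁻ z₀, P t (z - z₀) * G z₀ := by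
      refine setLIntegral_mono (Measurable.lintegral_prod_right' hPGm) fun t ht => ?_
      rw [hq t ht z]
      exact aux_heat_bound hr hq₀m hq₀0 ht.1 z
    have step2 : (∫⁻ t in Set.Ioc (0:ℝ) T, ∫⁻ z₀, P t (z - z₀) * G z₀)
        = ∫⁻ z₀, ∫⁻ t in Set.Ioc (0:ℝ) T, P t (z - z₀) * G z₀ :=
      lintegral_lintegral_swap hPGm.aemeasurable
    have step4 : ∀ x : ℝ, (∫⁻ t in Set.Ioc (0:ℝ) T, P t x)
        ≤ κ * ENNReal.ofReal (Real.exp (-x ^ 2 / (2 * T))) := by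
      intro x
      have hpt : ∀ t ∈ Set.Ioc (0:ℝ) T, P t x
          ≤ ENNReal.ofReal ((2 * Real.pi * t) ^ (-(1 : ℝ) / 2))
            * ENNReal.ofReal (Real.exp (-x ^ 2 / (2 * T))) := by
        intro t ht
        have ht0 : 0 < t := ht.1
        rw [← ENNReal.ofReal_mul (by positivity)]
        refine ENNReal.ofReal_le_ofReal (mul_le_mul_of_nonneg_left ?_ (by positivity))
        refine Real.exp_le_exp.2 ?_
        rw [div_le_div_iff₀ (by positivity) (by positivity)]
        nlinarith [mul_le_mul_of_nonneg_left ht.2 (sq_nonneg x)]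
      calc (∫⁻ t in Set.Ioc (0:ℝ) T, P t x)
          ≤ ∫⁻ t in Set.Ioc (0:ℝ) T, ENNReal.ofReal ((2 * Real.pi * t) ^ (-(1 : ℝ) / 2))
              * ENNReal.ofReal (Real.exp (-x ^ 2 / (2 * T))) :=
            setLIntegral_mono (by fun_prop) hpt
        _ = κ * ENNReal.ofReal (Real.exp (-x ^ 2 / (2 * T))) :=
            lintegral_mul_const _ (by fun_prop)
    have step5 : ∀ z₀ : ℝ, ENNReal.ofReal (Real.exp (-(z - z₀) ^ 2 / (2 * T))) * G z₀
        ≤ ENNReal.ofReal (Real.exp (-(c * z ^ 2))) * H z₀ := by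
      intro z₀
      simp only [hGdef, hHdef]
      rw [← ENNReal.ofReal_mul (Real.exp_nonneg _), ← ENNReal.ofReal_mul (Real.exp_nonneg _)]
      refine ENNReal.ofReal_le_ofReal ?_
      rw [← mul_assoc, ← Real.exp_add]
      refine mul_le_mul_of_nonneg_right (Real.exp_le_exp.2 ?_)
        (Real.rpow_nonneg (hq₀0 z₀) r)
      have := hgauss z z₀
      have hd : -(z - z₀) ^ 2 / (2 * T) = -((z - z₀) ^ 2 / (2 * T)) := by ring
      rw [hd]
      linarith
    calc (∫⁻ t in Set.Ioc (0:ℝ) T, ENNReal.ofReal (q t z ^ r))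
        ≤ ∫⁻ t in Set.Ioc (0:ℝ) T, ∫⁻ z₀, P t (z - z₀) * G z₀ := step1
      _ = ∫⁻ z₀, ∫⁻ t in Set.Ioc (0:ℝ) T, P t (z - z₀) * G z₀ := step2
      _ = ∫⁻ z₀, (∫⁻ t in Set.Ioc (0:ℝ) T, P t (z - z₀)) * G z₀ := by
          refine lintegral_congr fun z₀ => ?_
          exact lintegral_mul_const _ (by fun_prop)
      _ ≤ ∫⁻ z₀, (κ * ENNReal.ofReal (Real.exp (-(z - z₀) ^ 2 / (2 * T)))) * G z₀ := by
          refine lintegral_mono fun z₀ => ?_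
          exact mul_le_mul_left (step4 (z - z₀)) _
      _ = ∫⁻ z₀, κ * (ENNReal.ofReal (Real.exp (-(z - z₀) ^ 2 / (2 * T))) * G z₀) := by
          refine lintegral_congr fun z₀ => ?_
          rw [mul_assoc]
      _ ≤ ∫⁻ z₀, κ * (ENNReal.ofReal (Real.exp (-(c * z ^ 2))) * H z₀) := by
          refine lintegral_mono fun z₀ => ?_
          exact mul_le_mul_right (step5 z₀) _
      _ = κ * (ENNReal.ofReal (Real.exp (-(c * z ^ 2))) * M) := by
          rw [lintegral_const_mul _ (by fun_prop),
            lintegral_const_mul _ (by fun_prop)]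
      _ = ENNReal.ofReal (Real.exp (-(c * z ^ 2))) * (κ * M) := by ring
  -- joint measurability of the explicit formula
  have hinner : StronglyMeasurable fun p : ℝ × ℝ =>
      ∫ z₀ : ℝ, Real.exp (-|p.2 - z₀| ^ 2 / (2 * p.1)) * q₀ z₀ := by
    refine StronglyMeasurable.integral_prod_right'
      (f := fun w : (ℝ × ℝ) × ℝ => Real.exp (-|w.1.2 - w.2| ^ 2 / (2 * w.1.1)) * q₀ w.2) ?_
    refine Measurable.stronglyMeasurable ?_
    fun_prop
  have hQjoint : Measurable fun p : ℝ × ℝ => (2 * Real.pi * p.1) ^ (-(1 : ℝ) / 2) *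
      ∫ z₀ : ℝ, Real.exp (-|p.2 - z₀| ^ 2 / (2 * p.1)) * q₀ z₀ := by
    have h1 : Measurable fun p : ℝ × ℝ => (2 * Real.pi * p.1) ^ (-(1 : ℝ) / 2) := by fun_prop
    exact h1.mul hinner.measurable
  -- a.e. measurability in t of q t z ^ r, and nonnegativity
  have hnn : ∀ z : ℝ, ∀ t ∈ Set.Ioc (0:ℝ) T, 0 ≤ q t z := by
    intro z t ht
    have ht0 : 0 < t := ht.1
    rw [hq t ht z]
    have hK : (0:ℝ) < (2 * Real.pi * t) ^ (-(1 : ℝ) / 2) :=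
      Real.rpow_pos_of_pos (by positivity) _
    exact mul_nonneg hK.le (integral_nonneg fun z₀ =>
      mul_nonneg (Real.exp_nonneg _) (hq₀0 z₀))
  have hmeas_t : ∀ z : ℝ, AEStronglyMeasurable (fun t => q t z ^ r)
      (volume.restrict (Set.Ioc (0:ℝ) T)) := by
    intro z
    have h1 : Measurable fun t : ℝ => ((2 * Real.pi * t) ^ (-(1 : ℝ) / 2) *
        ∫ z₀ : ℝ, Real.exp (-|z - z₀| ^ 2 / (2 * t)) * q₀ z₀) ^ r := by
      have := hQjoint.comp (f := fun t : ℝ => (t, z)) (by fun_prop)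
      fun_prop
    refine (h1.aestronglyMeasurable).congr ?_
    refine ((ae_restrict_iff' measurableSet_Ioc).2 (Filter.Eventually.of_forall ?_))
    intro t ht
    dsimp only
    rw [hq t ht z]
  -- the real bound
  set A : ℝ := (κ * M).toReal with hAdef
  have hA0 : 0 ≤ A := ENNReal.toReal_nonneg
  have hreal : ∀ z : ℝ, (∫ t in Set.Ioc (0:ℝ) T, q t z ^ r)
      ≤ A * Real.exp (-(c * z ^ 2)) := by
    intro z
    have hnn' : 0 ≤ᵐ[volume.restrict (Set.Ioc (0:ℝ) T)] fun t => q t z ^ r := by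
      refine (ae_restrict_iff' measurableSet_Ioc).2 (Filter.Eventually.of_forall ?_)
      intro t ht
      exact Real.rpow_nonneg (hnn z t ht) r
    rw [integral_eq_lintegral_of_nonneg_ae hnn' (hmeas_t z)]
    have hb := hFz z
    have hne : ENNReal.ofReal (Real.exp (-(c * z ^ 2))) * (κ * M) ≠ ⊤ :=
      ENNReal.mul_ne_top ENNReal.ofReal_ne_top (ENNReal.mul_ne_top hκlt.ne hMlt.ne)
    calc (∫⁻ t in Set.Ioc (0:ℝ) T, ENNReal.ofReal (q t z ^ r)).toReal
        ≤ (ENNReal.ofReal (Real.exp (-(c * z ^ 2))) * (κ * M)).toReal :=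
          ENNReal.toReal_mono hne hb
      _ = A * Real.exp (-(c * z ^ 2)) := by
          rw [ENNReal.toReal_mul, ENNReal.toReal_ofReal (Real.exp_nonneg _)]
          ring
  have hint_nn : ∀ z : ℝ, 0 ≤ ∫ t in Set.Ioc (0:ℝ) T, q t z ^ r := by
    intro z
    refine integral_nonneg_of_ae ?_
    refine (ae_restrict_iff' measurableSet_Ioc).2 (Filter.Eventually.of_forall ?_)
    intro t ht
    exact Real.rpow_nonneg (hnn z t ht) r
  -- measurability in z
  have hsm : AEStronglyMeasurable (fun z : ℝ => (∫ t in Set.Ioc (0:ℝ) T, q t z ^ r) ^ δ)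
      volume := by
    have heq : (fun z : ℝ => (∫ t in Set.Ioc (0:ℝ) T, q t z ^ r) ^ δ)
        = fun z : ℝ => (∫ t in Set.Ioc (0:ℝ) T, ((2 * Real.pi * t) ^ (-(1 : ℝ) / 2) *
            ∫ z₀ : ℝ, Real.exp (-|z - z₀| ^ 2 / (2 * t)) * q₀ z₀) ^ r) ^ δ := by
      funext z
      congr 1
      refine setIntegral_congr_fun measurableSet_Ioc fun t ht => ?_
      rw [hq t ht z]
    rw [heq]
    have hjm : Measurable fun p : ℝ × ℝ => ((2 * Real.pi * p.2) ^ (-(1 : ℝ) / 2) *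
        ∫ z₀ : ℝ, Real.exp (-|p.1 - z₀| ^ 2 / (2 * p.2)) * q₀ z₀) ^ r := by
      have := hQjoint.comp (measurable_swap : Measurable fun p : ℝ × ℝ => (p.2, p.1))
      fun_prop
    have hF : StronglyMeasurable fun z : ℝ => ∫ t in Set.Ioc (0:ℝ) T,
        ((2 * Real.pi * t) ^ (-(1 : ℝ) / 2) *
          ∫ z₀ : ℝ, Real.exp (-|z - z₀| ^ 2 / (2 * t)) * q₀ z₀) ^ r :=
      StronglyMeasurable.integral_prod_right' (hjm.stronglyMeasurable)
    have : Measurable fun z : ℝ => (∫ t in Set.Ioc (0:ℝ) T,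
        ((2 * Real.pi * t) ^ (-(1 : ℝ) / 2) *
          ∫ z₀ : ℝ, Real.exp (-|z - z₀| ^ 2 / (2 * t)) * q₀ z₀) ^ r) ^ δ := by
      have hFm := hF.measurable
      fun_prop
    exact this.aestronglyMeasurable
  -- conclude by domination
  refine Integrable.mono' ((integrable_exp_neg_mul_sq (mul_pos hc0 hδ0)).const_mul
    (A ^ δ)) hsm ?_
  refine Filter.Eventually.of_forall fun z => ?_
  rw [Real.norm_of_nonneg (Real.rpow_nonneg (hint_nn z) δ)]
  calc (∫ t in Set.Ioc (0:ℝ) T, q t z ^ r) ^ δ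
      ≤ (A * Real.exp (-(c * z ^ 2))) ^ δ :=
        Real.rpow_le_rpow (hint_nn z) (hreal z) hδ0.le
    _ = A ^ δ * Real.exp (-(c * δ) * z ^ 2) := by
        rw [Real.mul_rpow hA0 (Real.exp_nonneg _), ← Real.exp_mul,
          show -(c * z ^ 2) * δ = -(c * δ) * z ^ 2 by ring]
end

section
/- Let T > 0, s > 1, u > 1 with conjugate u' = u/(u-1), and let f : [0,T] × ℝ × ℝ → [0, ∞) be measurable. Then ∫_ℝ ( ∫₀^T ∫_ℝ f(t,x₁,x₂)^s dx₁ dt )^{1/s} dx₂ ≤ ( ∫₀^T ( sup_{x ∈ ℝ²} f(t,x) )^{(s-1)u} dt )^{1/(su)} · ∫_ℝ ( ∫₀^T ( ∫_ℝ f(t,x₁,x₂) dx₁ )^{u'} dt )^{1/(su')} dx₂. -/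
open MeasureTheory

theorem stmt_6 (T s u u' : ℝ) (hT : 0 < T) (hs : 1 < s) (hu : 1 < u)
    (hu' : u' = u / (u - 1))
    (f : ℝ × ℝ × ℝ → ENNReal) (hf : Measurable f) :
    ∫⁻ x₂ : ℝ, (∫⁻ t in Set.Ioc (0 : ℝ) T, ∫⁻ x₁ : ℝ, f (t, x₁, x₂) ^ s) ^ (1 / s) ≤
      (∫⁻ t in Set.Ioc (0 : ℝ) T,
          (essSup (fun x : ℝ × ℝ => f (t, x.1, x.2)) volume) ^ ((s - 1) * u)) ^ (1 / (s * u)) *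
        ∫⁻ x₂ : ℝ,
          (∫⁻ t in Set.Ioc (0 : ℝ) T, (∫⁻ x₁ : ℝ, f (t, x₁, x₂)) ^ u') ^ (1 / (s * u')) := by
  have hconj : u.HolderConjugate u' := (Real.holderConjugate_iff_eq_conjExponent hu).2 hu'
  set E : ℝ → ENNReal := fun t => essSup (fun x : ℝ × ℝ => f (t, x.1, x.2)) volume with hE_def
  -- measurability of E
  have hE : Measurable E := by
    apply measurable_of_Iic
    intro c
    have hsetm : MeasurableSet {p : ℝ × (ℝ × ℝ) | c < f (p.1, p.2.1, p.2.2)} :=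
      measurableSet_lt measurable_const (hf.comp (by fun_prop))
    have hm : Measurable fun t : ℝ =>
        (volume : Measure (ℝ × ℝ)) (Prod.mk t ⁻¹' {p : ℝ × (ℝ × ℝ) | c < f (p.1, p.2.1, p.2.2)}) :=
      measurable_measure_prodMk_left hsetm
    have heq : E ⁻¹' Set.Iic c =
        (fun t : ℝ => (volume : Measure (ℝ × ℝ))
          (Prod.mk t ⁻¹' {p : ℝ × (ℝ × ℝ) | c < f (p.1, p.2.1, p.2.2)})) ⁻¹' {0} := by
      ext t
      simp only [Set.mem_preimage, Set.mem_Iic, Set.mem_singleton_iff]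
      have hslice : Prod.mk t ⁻¹' {p : ℝ × (ℝ × ℝ) | c < f (p.1, p.2.1, p.2.2)}
          = {x : ℝ × ℝ | c < f (t, x.1, x.2)} := rfl
      rw [hslice]
      constructor
      · intro h
        refine measure_mono_null (fun x hx => ?_)
          (meas_essSup_lt (f := fun x : ℝ × ℝ => f (t, x.1, x.2)) (μ := volume))
        exact lt_of_le_of_lt h hx
      · intro h
        refine essSup_le_of_ae_le c ?_
        rw [Filter.EventuallyLE, ae_iff]
        simpa only [not_le] using h
    exact heq ▸ hm (measurableSet_singleton 0)
  -- the bad set is null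
  have hSmeas : MeasurableSet {p : ℝ × ℝ × ℝ | E p.1 < f p} :=
    measurableSet_lt (hE.comp measurable_fst) hf
  have hSnull : ((volume : Measure ℝ).prod (volume : Measure (ℝ × ℝ)))
      {p : ℝ × ℝ × ℝ | E p.1 < f p} = 0 := by
    rw [Measure.measure_prod_null hSmeas]
    refine Filter.Eventually.of_forall fun t => ?_
    have hslice : Prod.mk t ⁻¹' {p : ℝ × ℝ × ℝ | E p.1 < f p}
        = {x : ℝ × ℝ | E t < f (t, x.1, x.2)} := by
      ext x; simp [Set.mem_preimage]
    show (volume : Measure (ℝ × ℝ)) (Prod.mk t ⁻¹' {p : ℝ × ℝ × ℝ | E p.1 < f p}) = 0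
    rw [hslice]
    exact meas_essSup_lt (f := fun x : ℝ × ℝ => f (t, x.1, x.2)) (μ := volume)
  -- transfer to coordinates (x₂, t, x₁)
  have he : MeasurePreserving (fun q : ℝ × ℝ × ℝ => (q.2.1, q.2.2, q.1))
      (volume : Measure (ℝ × ℝ × ℝ)) (volume : Measure (ℝ × ℝ × ℝ)) := by
    have h1 : MeasurePreserving (Prod.swap : ℝ × (ℝ × ℝ) → (ℝ × ℝ) × ℝ)
        (volume : Measure (ℝ × (ℝ × ℝ))) (volume : Measure ((ℝ × ℝ) × ℝ)) :=
      Measure.measurePreserving_swap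
    exact (volume_preserving_prodAssoc).comp h1
  have hS'null : (volume : Measure (ℝ × ℝ × ℝ))
      ((fun q : ℝ × ℝ × ℝ => (q.2.1, q.2.2, q.1)) ⁻¹' {p : ℝ × ℝ × ℝ | E p.1 < f p}) = 0 := by
    rw [he.measure_preimage hSmeas.nullMeasurableSet]
    exact hSnull
  have hae : ∀ᵐ x₂ : ℝ, ∀ᵐ t : ℝ, ∀ᵐ x₁ : ℝ, f (t, x₁, x₂) ≤ E t := by
    have h0 : ∀ᵐ q : ℝ × ℝ × ℝ
        ∂((volume : Measure ℝ).prod ((volume : Measure ℝ).prod (volume : Measure ℝ))),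
        f (q.2.1, q.2.2, q.1) ≤ E q.2.1 := by
      rw [ae_iff]
      simp only [not_le]; exact hS'null
    filter_upwards [Measure.ae_ae_of_ae_prod h0] with x₂ h1
    filter_upwards [Measure.ae_ae_of_ae_prod h1] with t h2 using h2
  set C : ENNReal := (∫⁻ t in Set.Ioc (0 : ℝ) T, E t ^ ((s - 1) * u)) ^ (1 / (s * u)) with hC
  have key : ∀ᵐ x₂ : ℝ,
      (∫⁻ t in Set.Ioc (0 : ℝ) T, ∫⁻ x₁ : ℝ, f (t, x₁, x₂) ^ s) ^ (1 / s) ≤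
        C * (∫⁻ t in Set.Ioc (0 : ℝ) T, (∫⁻ x₁ : ℝ, f (t, x₁, x₂)) ^ u') ^ (1 / (s * u')) := by
    filter_upwards [hae] with x₂ hx₂
    set h : ℝ → ENNReal := fun t => ∫⁻ x₁ : ℝ, f (t, x₁, x₂) with hh
    have hhm : Measurable h := by
      apply Measurable.lintegral_prod_right' (f := fun p : ℝ × ℝ => f (p.1, p.2, x₂))
      fun_prop
    have step1 : (∫⁻ t in Set.Ioc (0 : ℝ) T, ∫⁻ x₁ : ℝ, f (t, x₁, x₂) ^ s) ≤
        ∫⁻ t in Set.Ioc (0 : ℝ) T, E t ^ (s - 1) * h t := by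
      refine lintegral_mono_ae ?_
      filter_upwards [ae_restrict_of_ae hx₂] with t ht
      calc ∫⁻ x₁ : ℝ, f (t, x₁, x₂) ^ s
          ≤ ∫⁻ x₁ : ℝ, E t ^ (s - 1) * f (t, x₁, x₂) := by
            refine lintegral_mono_ae ?_
            filter_upwards [ht] with x₁ hx₁
            have hsplit : f (t, x₁, x₂) ^ s = f (t, x₁, x₂) ^ (s - 1) * f (t, x₁, x₂) ^ (1 : ℝ) := by
              rw [← ENNReal.rpow_add_of_nonneg (s - 1) 1 (by linarith) zero_le_one,
                sub_add_cancel]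
            rw [hsplit, ENNReal.rpow_one]
            exact mul_le_mul_left (ENNReal.rpow_le_rpow hx₁ (by linarith)) _
        _ = E t ^ (s - 1) * h t := lintegral_const_mul _ (by fun_prop)
    have step2 : (∫⁻ t in Set.Ioc (0 : ℝ) T, E t ^ (s - 1) * h t) ≤
        (∫⁻ t in Set.Ioc (0 : ℝ) T, E t ^ ((s - 1) * u)) ^ (1 / u) *
          (∫⁻ t in Set.Ioc (0 : ℝ) T, h t ^ u') ^ (1 / u') := by
      have := ENNReal.lintegral_mul_le_Lp_mul_Lq
        (volume.restrict (Set.Ioc (0 : ℝ) T)) hconj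
        (f := fun t => E t ^ (s - 1)) (g := h)
        ((hE.pow_const _).aemeasurable) hhm.aemeasurable
      simp only [Pi.mul_apply] at this
      refine le_trans this (le_of_eq ?_)
      congr 1
      congr 1
      exact lintegral_congr fun t => (ENNReal.rpow_mul _ _ _).symm
    calc (∫⁻ t in Set.Ioc (0 : ℝ) T, ∫⁻ x₁ : ℝ, f (t, x₁, x₂) ^ s) ^ (1 / s)
        ≤ ((∫⁻ t in Set.Ioc (0 : ℝ) T, E t ^ ((s - 1) * u)) ^ (1 / u) *
            (∫⁻ t in Set.Ioc (0 : ℝ) T, h t ^ u') ^ (1 / u')) ^ (1 / s) :=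
          ENNReal.rpow_le_rpow (step1.trans step2) (by positivity)
      _ = C * (∫⁻ t in Set.Ioc (0 : ℝ) T, h t ^ u') ^ (1 / (s * u')) := by
          rw [ENNReal.mul_rpow_of_nonneg _ _ (by positivity), hC,
            ← ENNReal.rpow_mul, ← ENNReal.rpow_mul]
          congr 2
          · field_simp
          · field_simp
  have hJmeas : Measurable fun x₂ : ℝ =>
      (∫⁻ t in Set.Ioc (0 : ℝ) T, (∫⁻ x₁ : ℝ, f (t, x₁, x₂)) ^ u') ^ (1 / (s * u')) := by
    have h1 : Measurable fun q : ℝ × ℝ => (∫⁻ x₁ : ℝ, f (q.1, x₁, q.2)) ^ u' := by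
      apply Measurable.pow_const
      apply Measurable.lintegral_prod_right' (f := fun p : (ℝ × ℝ) × ℝ => f (p.1.1, p.2, p.1.2))
      fun_prop
    exact (h1.lintegral_prod_left' (μ := volume.restrict (Set.Ioc (0 : ℝ) T))).pow_const _
  calc ∫⁻ x₂ : ℝ, (∫⁻ t in Set.Ioc (0 : ℝ) T, ∫⁻ x₁ : ℝ, f (t, x₁, x₂) ^ s) ^ (1 / s)
      ≤ ∫⁻ x₂ : ℝ,
          C * (∫⁻ t in Set.Ioc (0 : ℝ) T, (∫⁻ x₁ : ℝ, f (t, x₁, x₂)) ^ u') ^ (1 / (s * u')) :=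
        lintegral_mono_ae key
    _ = C * ∫⁻ x₂ : ℝ,
          (∫⁻ t in Set.Ioc (0 : ℝ) T, (∫⁻ x₁ : ℝ, f (t, x₁, x₂)) ^ u') ^ (1 / (s * u')) :=
        lintegral_const_mul C hJmeas
end
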